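/- Define c_{k,ℓ} for k, ℓ ≥ 0 by c_{k,ℓ} = ∑ a_{j1}···a_{jk}, where the sum is over tuples (j1,...,jk) of nonnegative integers with j1+...+jk = ℓ, and (a_i) is any sequence of integers with a_0 = ±1 (so that f(y) = ∑ a_i y^i is a unit in ℤ[[y]]). Then for every prime p, all k, ℓ ≥ 0 (not both of which are 0 after division) and all r ≥ 1: c_{kp^r, ℓp^r} ≡ c_{kp^{r-1}, ℓp^{r-1}} (mod p^r). -/

import Mathlib

open Polynomial Finset

/-- The antidiagonal-tuple sum equals the power-series coefficient of a power. -/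
private lemma antidiagTuple_sum_eq_coeff (a : ℕ → ℤ) (k m : ℕ) :
    ∑ j ∈ Finset.Nat.antidiagonalTuple k m, ∏ i, a (j i)
      = PowerSeries.coeff m ((PowerSeries.mk a) ^ k) := by
  rw [PowerSeries.coeff_pow]
  refine Finset.sum_nbij' (fun t : Fin k → ℕ =>
      Finsupp.onFinset (range k) (fun n => if h : n < k then t ⟨n, h⟩ else 0)
        (fun n hn => by
          rw [Finset.mem_range]
          by_contra h
          exact hn (dif_neg h)))
      (fun l => fun i : Fin k => l i.val) ?_ ?_ ?_ ?_ ?_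
  · intro t ht
    rw [Finset.Nat.mem_antidiagonalTuple] at ht
    rw [Finset.mem_finsuppAntidiag]
    constructor
    · simp only [Finsupp.onFinset_apply, Finsupp.coe_onFinset]
      rw [← Fin.sum_univ_eq_sum_range (fun n => if h : n < k then t ⟨n, h⟩ else 0) k, ← ht]
      exact Finset.sum_congr rfl fun i _ => by simp [i.isLt]
    · exact Finsupp.support_onFinset_subset
  · intro l hl
    rw [Finset.mem_finsuppAntidiag] at hl
    rw [Finset.Nat.mem_antidiagonalTuple]
    rw [Fin.sum_univ_eq_sum_range (fun n => l n) k]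
    exact hl.1
  · intro t ht
    funext i
    simp [Finsupp.onFinset_apply, i.isLt]
  · intro l hl
    rw [Finset.mem_finsuppAntidiag] at hl
    ext n
    simp only [Finsupp.onFinset_apply]
    by_cases h : n < k
    · rw [dif_pos h]
    · rw [dif_neg h]
      by_contra h0
      exact h (Finset.mem_range.mp (hl.2 (Finsupp.mem_support_iff.mpr fun he => h0 he.symm)))
  · intro t ht
    have h1 : ∏ i : Fin k, a (t i)
        = ∏ n ∈ range k, a (if h : n < k then t ⟨n, h⟩ else 0) := by
      rw [← Fin.prod_univ_eq_prod_range (fun n => a (if h : n < k then t ⟨n, h⟩ else 0)) k]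
      exact Finset.prod_congr rfl fun i _ => by simp [i.isLt]
    rw [h1]
    exact Finset.prod_congr rfl fun n hn => by
      simp [Finsupp.onFinset_apply, PowerSeries.coeff_mk]

/-- Coefficient `m` of a `k`-th power depends only on coefficients up to `m`. -/
private lemma coeff_pow_eq_of_agree (f g : PowerSeries ℤ) (k m : ℕ)
    (h : ∀ i ≤ m, PowerSeries.coeff i f = PowerSeries.coeff i g) :
    PowerSeries.coeff m (f ^ k) = PowerSeries.coeff m (g ^ k) := by
  rw [PowerSeries.coeff_pow, PowerSeries.coeff_pow]
  refine Finset.sum_congr rfl fun l hl => Finset.prod_congr rfl fun i hi => ?_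
  rw [Finset.mem_finsuppAntidiag] at hl
  exact h _ (hl.1 ▸ Finset.single_le_sum (fun _ _ => Nat.zero_le _) hi)

/-- For a sequence `(a_i)` of integers with `a_0 = ±1`, the coefficients
`c_{k,ℓ} = ∑_{j₁+⋯+j_k = ℓ} a_{j₁}⋯a_{j_k}` (the coefficient of `y^ℓ` in `f(y)^k`
for `f = ∑ a_i y^i`) satisfy the two-variable Gauss congruences for every prime. -/
theorem powers_of_unit_series_gauss (a : ℕ → ℤ) (ha : a 0 = 1 ∨ a 0 = -1)
    (c : ℕ → ℕ → ℤ)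
    (hc : ∀ k ℓ : ℕ, c k ℓ = ∑ j ∈ Finset.Nat.antidiagonalTuple k ℓ, ∏ i, a (j i))
    (p : ℕ) (hp : p.Prime) (k ℓ r : ℕ) (hr : 1 ≤ r) :
    c (k * p ^ r) (ℓ * p ^ r) ≡ c (k * p ^ (r - 1)) (ℓ * p ^ (r - 1)) [ZMOD (p : ℤ) ^ r] := by
  haveI : Fact p.Prime := ⟨hp⟩
  have hp' : 0 < p := hp.pos
  set M := ℓ * p ^ r with hM
  set F : ℤ[X] := ∑ i ∈ range (M + 1), Polynomial.monomial i (a i) with hF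
  have hFcoeff : ∀ i ≤ M, F.coeff i = a i := by
    intro i hi
    rw [hF, Polynomial.finset_sum_coeff]
    rw [Finset.sum_congr rfl fun n _ => Polynomial.coeff_monomial (n := n)]
    rw [Finset.sum_ite_eq' (range (M + 1)) i a]
    rw [if_pos (Finset.mem_range.mpr (Nat.lt_succ_of_le hi))]
  -- c k' m = (F ^ k').coeff m for m ≤ M
  have hcF : ∀ k' m, m ≤ M → c k' m = (F ^ k').coeff m := by
    intro k' m hm
    rw [hc, antidiagTuple_sum_eq_coeff a k' m,
      coeff_pow_eq_of_agree (PowerSeries.mk a) (F : PowerSeries ℤ) k' m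
        (fun i hi => by
          rw [PowerSeries.coeff_mk, Polynomial.coeff_coe, hFcoeff i (hi.trans hm)]),
      ← Polynomial.coe_pow, Polynomial.coeff_coe]
  -- p ∣ F^p - expand p F
  have hdvd1 : (p : ℤ[X]) ∣ F ^ p - Polynomial.expand ℤ p F := by
    rw [← Polynomial.C_eq_natCast, Polynomial.C_dvd_iff_dvd_coeff]
    intro n
    have hmap : (F ^ p - Polynomial.expand ℤ p F).map (Int.castRingHom (ZMod p)) = 0 := by
      rw [Polynomial.map_sub, Polynomial.map_pow, Polynomial.map_expand]
      have := Polynomial.map_frobenius_expand p (F.map (Int.castRingHom (ZMod p)))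
      rw [ZMod.frobenius_zmod, Polynomial.map_id] at this
      rw [← this, sub_self]
    have h2 := congrArg (fun q : (ZMod p)[X] => q.coeff n) hmap
    simp only [Polynomial.coeff_map, Polynomial.coeff_zero, Int.coe_castRingHom] at h2
    rwa [ZMod.intCast_zmod_eq_zero_iff_dvd] at h2
  -- p^r ∣ F^(p^r) - (expand p F)^(p^(r-1))
  have hdvd2 : ((p : ℤ[X])) ^ r ∣ F ^ (p ^ r) - (Polynomial.expand ℤ p F) ^ (p ^ (r - 1)) := by
    have h := dvd_sub_pow_of_dvd_sub hdvd1 (r - 1)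
    rw [← pow_mul] at h
    have hr1 : r - 1 + 1 = r := Nat.succ_pred_eq_of_pos hr
    have hr2 : p * p ^ (r - 1) = p ^ r := by
      rw [← pow_succ']
      rw [hr1]
    rw [hr1, hr2] at h
    exact_mod_cast h
  -- raise to the k-th power
  have hdvd3 : ((p : ℤ[X])) ^ r ∣ F ^ (k * p ^ r)
      - (Polynomial.expand ℤ p F) ^ (k * p ^ (r - 1)) := by
    have := hdvd2.trans (sub_dvd_pow_sub_pow (F ^ (p ^ r))
      ((Polynomial.expand ℤ p F) ^ (p ^ (r - 1))) k)
    rw [← pow_mul, ← pow_mul, mul_comm (p ^ r) k, mul_comm (p ^ (r - 1)) k] at this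
    exact this
  obtain ⟨G, hG⟩ := hdvd3
  -- extract coefficients
  have hcoeffG : (F ^ (k * p ^ r)).coeff M
      - ((Polynomial.expand ℤ p F) ^ (k * p ^ (r - 1))).coeff M
      = (p : ℤ) ^ r * G.coeff M := by
    have := congrArg (fun q : ℤ[X] => q.coeff M) hG
    simp only [Polynomial.coeff_sub] at this
    rw [this]
    rw [show ((p : ℤ[X])) ^ r = Polynomial.C ((p : ℤ) ^ r) by rw [map_pow, Polynomial.C_eq_natCast]]
    rw [Polynomial.coeff_C_mul]
  have hexp : ((Polynomial.expand ℤ p F) ^ (k * p ^ (r - 1))).coeff M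
      = (F ^ (k * p ^ (r - 1))).coeff (ℓ * p ^ (r - 1)) := by
    rw [← map_pow, hM]
    have : ℓ * p ^ r = p * (ℓ * p ^ (r - 1)) := by
      rw [mul_comm p, mul_assoc, ← pow_succ, Nat.sub_add_cancel hr]
    rw [this, Polynomial.coeff_expand_mul' hp']
  have hle : ℓ * p ^ (r - 1) ≤ M :=
    Nat.mul_le_mul_left ℓ (Nat.pow_le_pow_right hp' (Nat.sub_le r 1))
  rw [Int.modEq_iff_dvd, hcF (k * p ^ r) (ℓ * p ^ r) le_rfl,
    hcF (k * p ^ (r - 1)) (ℓ * p ^ (r - 1)) hle, ← hexp,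
    show ((Polynomial.expand ℤ p) F ^ (k * p ^ (r - 1))).coeff M - (F ^ (k * p ^ r)).coeff M
      = -((p : ℤ) ^ r * G.coeff M) from by rw [← hcoeffG]; ring]
  exact dvd_neg.mpr (Dvd.intro _ rfl)
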